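/- The centralizer in PGL₃(ℂ) of the image of the Sym² representation of SL₂(ℂ) (composed with the projection GL₃(ℂ) → PGL₃(ℂ)) is trivial; in particular its component group is trivial. -/

import Mathlib

open Matrix

/-- The matrix of `Sym²` of `[[a,b],[c,d]] ∈ SL₂(ℂ)`. -/
def sym2Mat (a b c d : ℂ) : Matrix (Fin 3) (Fin 3) ℂ :=
  !![a ^ 2, a * b, b ^ 2; 2 * a * c, a * d + b * c, 2 * b * d; c ^ 2, c * d, d ^ 2]

lemma center_scalar {Z : GL (Fin 3) ℂ} (hZ : Z ∈ Subgroup.center (GL (Fin 3) ℂ)) :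
    ∃ r : ℂ, (Z : Matrix (Fin 3) (Fin 3) ℂ) = r • 1 := by
  have h : ∀ t : TransvectionStruct (Fin 3) ℂ,
      Commute t.toMatrix (Z : Matrix (Fin 3) (Fin 3) ℂ) := by
    intro t
    have ht := Subgroup.mem_center_iff.mp hZ
      (⟨t.toMatrix, t.inv.toMatrix, t.mul_inv, t.inv_mul⟩ : GL (Fin 3) ℂ)
    have h2 := congrArg Units.val ht
    simpa [Units.val_mul, Commute, SemiconjBy] using h2
  obtain ⟨r, hr⟩ := Matrix.mem_range_scalar_of_commute_transvectionStruct h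
  refine ⟨r, ?_⟩
  rw [← hr]
  ext i j
  simp [Matrix.scalar_apply, Matrix.diagonal, Matrix.one_apply, Matrix.smul_apply]

lemma key {X A : GL (Fin 3) ℂ}
    (h : QuotientGroup.mk' (Subgroup.center (GL (Fin 3) ℂ)) A *
         QuotientGroup.mk' (Subgroup.center (GL (Fin 3) ℂ)) X
       = QuotientGroup.mk' (Subgroup.center (GL (Fin 3) ℂ)) X *
         QuotientGroup.mk' (Subgroup.center (GL (Fin 3) ℂ)) A) :
    ∃ r : ℂ, r ^ 3 = 1 ∧
      (X : Matrix (Fin 3) (Fin 3) ℂ) * (A : Matrix (Fin 3) (Fin 3) ℂ)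
        = r • ((A : Matrix (Fin 3) (Fin 3) ℂ) * (X : Matrix (Fin 3) (Fin 3) ℂ)) := by
  rw [← _root_.map_mul, ← _root_.map_mul, QuotientGroup.mk'_eq_mk'] at h
  obtain ⟨Z, hZc, hZ⟩ := h
  obtain ⟨r, hr⟩ := center_scalar hZc
  have hmat : (X : Matrix (Fin 3) (Fin 3) ℂ) * A = r • ((A : Matrix (Fin 3) (Fin 3) ℂ) * X) := by
    have := congrArg Units.val hZ
    simp only [Units.val_mul] at this
    rw [hr] at this
    rw [← this, mul_assoc]
    simp [Matrix.mul_smul, Matrix.smul_mul]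
  refine ⟨r, ?_, hmat⟩
  have hd := congrArg Matrix.det hmat
  rw [Matrix.det_smul] at hd
  simp only [Fintype.card_fin, det_mul] at hd
  have hX : IsUnit (X : Matrix (Fin 3) (Fin 3) ℂ).det :=
    (Matrix.isUnit_iff_isUnit_det _).mp X.isUnit
  have hA : IsUnit (A : Matrix (Fin 3) (Fin 3) ℂ).det :=
    (Matrix.isUnit_iff_isUnit_det _).mp A.isUnit
  have hne : (X : Matrix (Fin 3) (Fin 3) ℂ).det * (A : Matrix (Fin 3) (Fin 3) ℂ).det ≠ 0 :=
    mul_ne_zero hX.ne_zero hA.ne_zero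
  have h3 : (r ^ 3 - 1) * ((A : Matrix (Fin 3) (Fin 3) ℂ).det *
      (X : Matrix (Fin 3) (Fin 3) ℂ).det) = 0 := by
    linear_combination -hd
  rcases mul_eq_zero.mp h3 with h4 | h4
  · linear_combination h4
  · exact absurd (by linear_combination h4) hne

lemma aux0 {u r c : ℂ} (hr : r ^ 3 = 1) (hc : c ^ 3 ≠ 1) (h : u = c * r * u) : u = 0 := by
  have h2 : (1 - c ^ 3) * u = 0 := by
    linear_combination (1 + c * r + c ^ 2 * r ^ 2) * h + c ^ 3 * u * hr
  rcases mul_eq_zero.mp h2 with h3 | h3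
  · exact absurd (by linear_combination -h3) hc
  · exact h3

/-- The centralizer in `PGL₃(ℂ)` of the image of the `Sym²` representation of
`SL₂(ℂ)` (projected to `PGL₃(ℂ)`) is the trivial subgroup; in particular its component
group is trivial. -/
theorem stmt9 :
    Subgroup.centralizer
      {y : (GL (Fin 3) ℂ) ⧸ Subgroup.center (GL (Fin 3) ℂ) |
        ∃ A : GL (Fin 3) ℂ,
          (∃ a b c d : ℂ, a * d - b * c = 1 ∧
            (A : Matrix (Fin 3) (Fin 3) ℂ) = sym2Mat a b c d) ∧
          y = QuotientGroup.mk' (Subgroup.center (GL (Fin 3) ℂ)) A} = ⊥ := by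
  rw [eq_bot_iff]
  intro x hx
  obtain ⟨X, rfl⟩ := QuotientGroup.mk_surjective x
  rw [Subgroup.mem_centralizer_iff] at hx
  have hD1 : sym2Mat 2 0 0 2⁻¹ * sym2Mat 2⁻¹ 0 0 2 = 1 := by
    ext i j
    fin_cases i <;> fin_cases j <;>
      norm_num [sym2Mat, Matrix.mul_apply, Fin.sum_univ_three, Matrix.one_apply,
        Matrix.vecHead, Matrix.vecTail, Fin.ext_iff, Matrix.cons_val_two]
  have hD2 : sym2Mat 2⁻¹ 0 0 2 * sym2Mat 2 0 0 2⁻¹ = 1 := by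
    ext i j
    fin_cases i <;> fin_cases j <;>
      norm_num [sym2Mat, Matrix.mul_apply, Fin.sum_univ_three, Matrix.one_apply,
        Matrix.vecHead, Matrix.vecTail, Fin.ext_iff, Matrix.cons_val_two]
  have hU1 : sym2Mat 1 1 0 1 * sym2Mat 1 (-1) 0 1 = 1 := by
    ext i j
    fin_cases i <;> fin_cases j <;>
      norm_num [sym2Mat, Matrix.mul_apply, Fin.sum_univ_three, Matrix.one_apply,
        Matrix.vecHead, Matrix.vecTail, Fin.ext_iff, Matrix.cons_val_two]
  have hU2 : sym2Mat 1 (-1) 0 1 * sym2Mat 1 1 0 1 = 1 := by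
    ext i j
    fin_cases i <;> fin_cases j <;>
      norm_num [sym2Mat, Matrix.mul_apply, Fin.sum_univ_three, Matrix.one_apply,
        Matrix.vecHead, Matrix.vecTail, Fin.ext_iff, Matrix.cons_val_two]
  set D : GL (Fin 3) ℂ := ⟨sym2Mat 2 0 0 2⁻¹, sym2Mat 2⁻¹ 0 0 2, hD1, hD2⟩ with hDdef
  set U : GL (Fin 3) ℂ := ⟨sym2Mat 1 1 0 1, sym2Mat 1 (-1) 0 1, hU1, hU2⟩ with hUdef
  have hcD := hx (QuotientGroup.mk' (Subgroup.center (GL (Fin 3) ℂ)) D)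
    ⟨D, ⟨2, 0, 0, 2⁻¹, by norm_num, rfl⟩, rfl⟩
  have hcU := hx (QuotientGroup.mk' (Subgroup.center (GL (Fin 3) ℂ)) U)
    ⟨U, ⟨1, 1, 0, 1, by norm_num, rfl⟩, rfl⟩
  obtain ⟨r, hr3, hrEq⟩ := key hcD
  obtain ⟨s, hs3, hsEq⟩ := key hcU
  set M : Matrix (Fin 3) (Fin 3) ℂ := (X : Matrix (Fin 3) (Fin 3) ℂ) with hMdef
  have eD := Matrix.ext_iff.mpr hrEq
  have eU := Matrix.ext_iff.mpr hsEq
  simp only [hDdef, hUdef, sym2Mat, Units.val_mk] at eD eU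
  -- off-diagonal vanishing from the diagonal element D
  have z01 : M 0 1 = 0 := by
    refine aux0 hr3 (c := 4) (by norm_num) ?_
    have h := eD 0 1
    norm_num [Matrix.mul_apply, Fin.sum_univ_three, Matrix.smul_apply, smul_eq_mul,
      Matrix.vecHead, Matrix.vecTail, Matrix.vecMul, dotProduct, Matrix.cons_val_two] at h
    linear_combination h
  have z02 : M 0 2 = 0 := by
    refine aux0 hr3 (c := 16) (by norm_num) ?_
    have h := eD 0 2
    norm_num [Matrix.mul_apply, Fin.sum_univ_three, Matrix.smul_apply, smul_eq_mul,
      Matrix.vecHead, Matrix.vecTail, Matrix.vecMul, dotProduct, Matrix.cons_val_two] at h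
    linear_combination 4 * h
  have z10 : M 1 0 = 0 := by
    refine aux0 hr3 (c := 4⁻¹) (by norm_num) ?_
    have h := eD 1 0
    norm_num [Matrix.mul_apply, Fin.sum_univ_three, Matrix.smul_apply, smul_eq_mul,
      Matrix.vecHead, Matrix.vecTail, Matrix.vecMul, dotProduct, Matrix.cons_val_two] at h
    linear_combination 4⁻¹ * h
  have z12 : M 1 2 = 0 := by
    refine aux0 hr3 (c := 4) (by norm_num) ?_
    have h := eD 1 2
    norm_num [Matrix.mul_apply, Fin.sum_univ_three, Matrix.smul_apply, smul_eq_mul,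
      Matrix.vecHead, Matrix.vecTail, Matrix.vecMul, dotProduct, Matrix.cons_val_two] at h
    linear_combination 4 * h
  have z20 : M 2 0 = 0 := by
    refine aux0 hr3 (c := 16⁻¹) (by norm_num) ?_
    have h := eD 2 0
    norm_num [Matrix.mul_apply, Fin.sum_univ_three, Matrix.smul_apply, smul_eq_mul,
      Matrix.vecHead, Matrix.vecTail, Matrix.vecMul, dotProduct, Matrix.cons_val_two] at h
    linear_combination 4⁻¹ * h
  have z21 : M 2 1 = 0 := by
    refine aux0 hr3 (c := 4⁻¹) (by norm_num) ?_
    have h := eD 2 1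
    norm_num [Matrix.mul_apply, Fin.sum_univ_three, Matrix.smul_apply, smul_eq_mul,
      Matrix.vecHead, Matrix.vecTail, Matrix.vecMul, dotProduct, Matrix.cons_val_two] at h
    linear_combination h
  -- M00 ≠ 0
  have hdet : IsUnit M.det := (Matrix.isUnit_iff_isUnit_det _).mp X.isUnit
  have hdet3 : M.det = M 0 0 * M 1 1 * M 2 2 := by
    rw [Matrix.det_fin_three, z01, z02, z10, z12, z20, z21]; ring
  have h00 : M 0 0 ≠ 0 := by
    intro h0
    rw [hdet3, h0] at hdet
    simp at hdet
  -- equations from the unipotent element U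
  have f00 : M 0 0 = s * M 0 0 := by
    have h := eU 0 0
    norm_num [Matrix.mul_apply, Fin.sum_univ_three, Matrix.smul_apply, smul_eq_mul,
      Matrix.vecHead, Matrix.vecTail, Matrix.vecMul, dotProduct, Matrix.cons_val_two, z01, z02, z10, z12, z20, z21] at h
    linear_combination h
  have f01 : M 0 0 = s * M 1 1 := by
    have h := eU 0 1
    norm_num [Matrix.mul_apply, Fin.sum_univ_three, Matrix.smul_apply, smul_eq_mul,
      Matrix.vecHead, Matrix.vecTail, Matrix.vecMul, dotProduct, Matrix.cons_val_two, z01, z02, z10, z12, z20, z21] at h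
    linear_combination h
  have f02 : M 0 0 = s * M 2 2 := by
    have h := eU 0 2
    norm_num [Matrix.mul_apply, Fin.sum_univ_three, Matrix.smul_apply, smul_eq_mul,
      Matrix.vecHead, Matrix.vecTail, Matrix.vecMul, dotProduct, Matrix.cons_val_two, z01, z02, z10, z12, z20, z21] at h
    linear_combination h
  have hs1 : s = 1 := by
    have h2 : (s - 1) * M 0 0 = 0 := by linear_combination -f00
    rcases mul_eq_zero.mp h2 with h3 | h3
    · linear_combination h3
    · exact absurd h3 h00
  rw [hs1, one_mul] at f01 f02
  -- M is scalar
  have hMs : M = M 0 0 • (1 : Matrix (Fin 3) (Fin 3) ℂ) := by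
    ext i j
    fin_cases i <;> fin_cases j <;>
      simp [z01, z02, z10, z12, z20, z21, ← f01, ← f02, Matrix.one_apply]
  -- conclude
  rw [Subgroup.mem_bot]
  rw [QuotientGroup.eq_one_iff]
  refine Subgroup.mem_center_iff.mpr fun g => Units.ext ?_
  simp only [Units.val_mul]
  show (g : Matrix (Fin 3) (Fin 3) ℂ) * M = M * (g : Matrix (Fin 3) (Fin 3) ℂ)
  rw [hMs]
  simp [Matrix.smul_mul, Matrix.mul_smul]
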